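/- Let G be a connected graph and T a nonempty subset of its vertices. Suppose every vertex of G is within distance K (in the graph metric) of some vertex of T. Then G contains a connected subgraph (a Steiner tree) containing all of T with at most (2K+1)(|T|-1) edges. -/

import Mathlib

open Relation

/-- Crossing lemma for reflexive-transitive closures. -/
private lemma cross_lemma {α : Type*} {r : α → α → Prop} {S : Set α} {x y : α}
    (h : ReflTransGen r x y) (hx : x ∈ S) (hy : y ∉ S) :
    ∃ a ∈ S, ∃ b ∉ S, r a b := by
  induction h with
  | refl => exact absurd hx hy
  | tail h₁ h₂ ih =>
    rename_i b c
    by_cases hb : b ∈ S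
    · exact ⟨b, hb, c, hy, h₂⟩
    · exact ih hb

private lemma aux_chain {V : Type*} (G : SimpleGraph V) (hG : G.Connected)
    (T : Set V) (K : ℕ) (hcov : ∀ v : V, ∃ t ∈ T, G.dist t v ≤ K) :
    ∀ {t t' : V}, t ∈ T → t' ∈ T →
      ReflTransGen (fun a b => b ∈ T ∧ G.dist a b ≤ 2 * K + 1) t t' := by
  set r := fun a b => b ∈ T ∧ G.dist a b ≤ 2 * K + 1 with hr
  have key : ∀ {v t' : V} (p : G.Walk v t'), ∀ s, s ∈ T → G.dist s v ≤ K → t' ∈ T →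
      ReflTransGen r s t' := by
    intro v t' p
    induction p with
    | nil =>
      intro s hs hd ht'
      exact ReflTransGen.single ⟨ht', by omega⟩
    | @cons u w x h' p' ih =>
      intro s hs hd ht'
      obtain ⟨s', hs', hds'⟩ := hcov w
      have hdsw : G.dist s w ≤ K + 1 :=
        le_trans (hG.dist_triangle (v := u)) (by
          have : G.dist u w ≤ 1 := by
            simpa using SimpleGraph.dist_le h'.toWalk
          omega)
      have hss' : G.dist s s' ≤ 2 * K + 1 := by
        have := hG.dist_triangle (u := s) (v := w) (w := s')
        rw [SimpleGraph.dist_comm (u := w)] at this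
        omega
      exact ReflTransGen.head ⟨hs', hss'⟩ (ih s' hs' hds' ht')
  intro t t' ht ht'
  obtain ⟨p⟩ := hG t t'
  exact key p t ht (by simp [SimpleGraph.dist_self]) ht'

/-- Let `G` be a connected graph and `T` a nonempty subset of its
vertices. Suppose every vertex of `G` is within distance `K` of some vertex of `T`.
Then `G` contains a connected subgraph containing all of `T` with at most
`(2K+1)(|T|-1)` edges. -/
theorem steiner_tree_of_bounded_distance {V : Type*} [Fintype V]
    (G : SimpleGraph V) (hG : G.Connected) (T : Set V) (hT : T.Nonempty) (K : ℕ)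
    (hcov : ∀ v : V, ∃ t ∈ T, G.dist t v ≤ K) :
    ∃ H : G.Subgraph, H.Connected ∧ T ⊆ H.verts ∧
      H.edgeSet.ncard ≤ (2 * K + 1) * (T.ncard - 1) := by
  classical
  set r := fun a b => b ∈ T ∧ G.dist a b ≤ 2 * K + 1 with hr
  obtain ⟨t₀, ht₀⟩ := hT
  -- grow the subgraph
  have grow : ∀ n : ℕ, ∀ S : Set V, S ⊆ T → t₀ ∈ S → (T \ S).ncard = n →
      ∀ H : G.Subgraph, H.Connected → S ⊆ H.verts →
        H.edgeSet.ncard ≤ (2 * K + 1) * (S.ncard - 1) →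
      ∃ H' : G.Subgraph, H'.Connected ∧ T ⊆ H'.verts ∧
        H'.edgeSet.ncard ≤ (2 * K + 1) * (T.ncard - 1) := by
    intro n
    induction n using Nat.strong_induction_on with
    | _ n ih =>
      intro S hST ht₀S hdef H hHc hSH hHe
      by_cases hTS : T ⊆ S
      · have hEq : S = T := le_antisymm hST hTS
        subst hEq
        exact ⟨H, hHc, hSH, hHe⟩
      · obtain ⟨t', ht'T, ht'S⟩ := Set.not_subset.mp hTS
        have hchain := aux_chain G hG T K hcov ht₀ ht'T
        obtain ⟨a, haS, b, hbS, hbT, hab⟩ := cross_lemma hchain ht₀S ht'S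
        -- shortest walk from a to b
        obtain ⟨p, hp⟩ := hG.exists_walk_length_eq_dist a b
        set H' := H ⊔ p.toSubgraph with hH'
        have hconn' : H'.Connected := by
          apply SimpleGraph.Subgraph.connected_sup hHc.preconnected p.toSubgraph_connected.preconnected
          exact ⟨a, hSH haS, p.start_mem_verts_toSubgraph⟩
        have hbmem : b ∈ H'.verts := Or.inr p.end_mem_verts_toSubgraph
        have hS'sub : insert b S ⊆ H'.verts := by
          intro x hx
          rcases hx with rfl | hx
          · exact hbmem
          · exact Or.inl (hSH hx)
        have hSfin : S.Finite := Set.toFinite S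
        have hSne : S.Nonempty := ⟨t₀, ht₀S⟩
        have hScard : 0 < S.ncard := by
          exact (Set.ncard_pos hSfin).mpr hSne
        have hedge' : H'.edgeSet.ncard ≤ (2 * K + 1) * ((insert b S).ncard - 1) := by
          have h1 : H'.edgeSet = H.edgeSet ∪ p.toSubgraph.edgeSet :=
            SimpleGraph.Subgraph.edgeSet_sup
          have h2 : p.toSubgraph.edgeSet.ncard ≤ 2 * K + 1 := by
            have hsub : p.toSubgraph.edgeSet ⊆ ↑p.edges.toFinset := by
              intro e he
              rw [SimpleGraph.Walk.mem_edges_toSubgraph] at he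
              simpa using he
            calc p.toSubgraph.edgeSet.ncard ≤ (↑p.edges.toFinset : Set (Sym2 V)).ncard :=
                  Set.ncard_le_ncard hsub (Set.toFinite _)
              _ ≤ p.edges.length := by
                  rw [Set.ncard_coe_finset]
                  exact List.toFinset_card_le _
              _ = p.length := p.length_edges
              _ ≤ 2 * K + 1 := by rw [hp]; exact hab
          have h3 : H'.edgeSet.ncard ≤ H.edgeSet.ncard + p.toSubgraph.edgeSet.ncard := by
            rw [h1]; exact Set.ncard_union_le _ _
          have h4 : (insert b S).ncard = S.ncard + 1 :=
            Set.ncard_insert_of_notMem hbS hSfin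
          rw [h4]
          have : (2 * K + 1) * (S.ncard + 1 - 1) = (2 * K + 1) * (S.ncard - 1) + (2 * K + 1) := by
            have : S.ncard + 1 - 1 = (S.ncard - 1) + 1 := by omega
            rw [this, Nat.mul_succ]
          omega
        have hdef' : (T \ insert b S).ncard < n := by
          have h5 : T \ insert b S = (T \ S) \ {b} := by
            ext x; simp [Set.mem_diff]; tauto
          have hb' : b ∈ T \ S := ⟨hbT, hbS⟩
          have : (T \ S).Finite := Set.toFinite _
          rw [h5]
          have := Set.ncard_diff_singleton_lt_of_mem hb' this
          omega
        exact ih _ hdef' (insert b S) (Set.insert_subset hbT hST)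
          (Set.mem_insert_of_mem _ ht₀S) rfl H' hconn' hS'sub hedge'
  exact grow (T \ {t₀}).ncard {t₀} (Set.singleton_subset_iff.mpr ht₀) rfl
    (by simp) (G.singletonSubgraph t₀) SimpleGraph.Subgraph.singletonSubgraph_connected
    (by simp)
    (by simp [SimpleGraph.edgeSet_singletonSubgraph])
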